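/- For every real ε > 0 there exist a sequence (p_i)_{i∈ℕ} of reals with 0 < p_i < 1 for all i and a constant C > 0 such that for all integers n ≥ 2: T_LO(p_1,…,p_n) ≤ C · n² · (ln n)^{1+ε}. -/

import Mathlib

open Real Finset

private lemma aux_exp_le (x : ℝ) (h0 : 0 ≤ x) (h1 : x ≤ 1/2) :
    Real.exp (-(2*x)) ≤ 1 - x := by
  have h2 : (1:ℝ) + 2*x ≤ Real.exp (2*x) := by
    have := Real.add_one_le_exp (2*x); linarith
  have hpos : (0:ℝ) < 1 + 2*x := by linarith
  have h3 : Real.exp (-(2*x)) ≤ (1+2*x)⁻¹ := by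
    rw [Real.exp_neg]
    exact inv_anti₀ hpos h2
  have h4 : (1+2*x)⁻¹ ≤ 1 - x := by
    rw [inv_eq_one_div, div_le_iff₀ hpos]; nlinarith
  linarith

private lemma aux_log_lb (x : ℝ) (hx : 0 < x) : 1 - x⁻¹ ≤ Real.log x := by
  have := Real.log_le_sub_one_of_pos (inv_pos.mpr hx)
  rw [Real.log_inv] at this; linarith

private lemma aux_step (j : ℕ) (hj : 2 ≤ j) :
    1/(((j:ℝ)+1) * Real.log ((j:ℝ)+1)) ≤
      Real.log (Real.log ((j:ℝ)+1)) - Real.log (Real.log (j:ℝ)) := by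
  have hj2 : (2:ℝ) ≤ (j:ℝ) := by exact_mod_cast hj
  have hu : 0 < Real.log (j:ℝ) := Real.log_pos (by linarith)
  have hv : 0 < Real.log ((j:ℝ)+1) := Real.log_pos (by linarith)
  have huv : Real.log (j:ℝ) ≤ Real.log ((j:ℝ)+1) :=
    Real.log_le_log (by linarith) (by linarith)
  set u := Real.log (j:ℝ) with hudef
  set v := Real.log ((j:ℝ)+1) with hvdef
  have h1 : 1/((j:ℝ)+1) ≤ v - u := by
    have hq : (0:ℝ) < ((j:ℝ)+1)/(j:ℝ) := by positivity
    have h := aux_log_lb (((j:ℝ)+1)/(j:ℝ)) hq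
    rw [Real.log_div (by positivity) (by positivity), inv_div] at h
    have he : 1 - (j:ℝ)/((j:ℝ)+1) = 1/((j:ℝ)+1) := by field_simp; ring
    linarith
  have h2 : 1 - u/v ≤ Real.log v - Real.log u := by
    have hq : (0:ℝ) < v/u := by positivity
    have h := aux_log_lb (v/u) hq
    rw [Real.log_div (by positivity) (by positivity), inv_div] at h
    linarith
  have h3 : (1/((j:ℝ)+1))/v ≤ 1 - u/v := by
    have he : 1 - u/v = (v-u)/v := by field_simp
    rw [he]
    gcongr
  have h4 : (1/((j:ℝ)+1))/v = 1/(((j:ℝ)+1)*v) := by field_simp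
  linarith [h4.symm.le, h4.le]

private lemma aux_tele (n : ℕ) (hn : 2 ≤ n) :
    ∑ j ∈ Finset.Ico 2 n, 1/(((j:ℝ)+1) * Real.log ((j:ℝ)+1)) ≤
      Real.log (Real.log (n:ℝ)) - Real.log (Real.log 2) := by
  induction n, hn using Nat.le_induction with
  | base => simp
  | succ n hn ih =>
    rw [Finset.sum_Ico_succ_top hn]
    have := aux_step n hn
    push_cast
    push_cast at ih this
    linarith



/-- `TLO n p = ∑_{i=1}^n 1/(2 p_i ∏_{j=1}^{i-1} (1 - p_j))`, the exact expected run time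
of the (1+1) EA with bit flip probabilities `p 1, …, p n` on the `n`-bit LeadingOnes
function (Böttcher–Doerr–Neumann). -/
noncomputable def TLO (n : ℕ) (p : ℕ → ℝ) : ℝ :=
  ∑ i ∈ Finset.Icc 1 n, 1 / (2 * p i * ∏ j ∈ Finset.Ico 1 i, (1 - p j))

/-- LeadingOnes part of Corollary 4.7: for every `ε > 0` there is a single sequence
of mutation probabilities such that for all `n ≥ 2` the expected run time on
LeadingOnes_n is at most `C · n² · (ln n)^{1+ε}`. -/
theorem stmt16 (ε : ℝ) (hε : 0 < ε) :
    ∃ p : ℕ → ℝ, (∀ i : ℕ, 1 ≤ i → 0 < p i ∧ p i < 1) ∧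
      ∃ C : ℝ, 0 < C ∧ ∀ n : ℕ, 2 ≤ n →
        TLO n p ≤ C * (n : ℝ) ^ 2 * Real.log n ^ (1 + ε) := by
  have hl2 : (0:ℝ) < Real.log 2 := Real.log_pos (by norm_num)
  have hl2' : Real.log 2 ≤ 1 := by
    have h2e : (2:ℝ) ≤ Real.exp 1 := by
      have := Real.exp_one_gt_d9; linarith
    calc Real.log 2 ≤ Real.log (Real.exp 1) := Real.log_le_log (by norm_num) h2e
      _ = 1 := Real.log_exp 1
  set a := min (ε/2) (Real.log 2) with hadef
  have ha0 : 0 < a := lt_min (by linarith) hl2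
  have ha2 : a ≤ Real.log 2 := min_le_right _ _
  have haε : 2*a ≤ ε := by
    have := min_le_left (ε/2) (Real.log 2); linarith
  set p : ℕ → ℝ := fun j => a / (((j:ℝ)+1) * Real.log ((j:ℝ)+1)) with hpdef
  -- basic facts about the denominators
  have hD : ∀ j : ℕ, 1 ≤ j → 2*Real.log 2 ≤ ((j:ℝ)+1) * Real.log ((j:ℝ)+1) := by
    intro j hj
    have hj1 : (1:ℝ) ≤ (j:ℝ) := by exact_mod_cast hj
    have h2 : Real.log 2 ≤ Real.log ((j:ℝ)+1) := Real.log_le_log (by norm_num) (by linarith)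
    nlinarith
  have hDpos : ∀ j : ℕ, 1 ≤ j → (0:ℝ) < ((j:ℝ)+1) * Real.log ((j:ℝ)+1) := by
    intro j hj; have := hD j hj; linarith
  have hppos : ∀ j : ℕ, 1 ≤ j → 0 < p j := by
    intro j hj; exact div_pos ha0 (hDpos j hj)
  have hphalf : ∀ j : ℕ, 1 ≤ j → p j ≤ 1/2 := by
    intro j hj
    have h1 : p j ≤ a / (2*Real.log 2) := by
      apply div_le_div_of_nonneg_left ha0.le (by positivity) (hD j hj)
    have h2 : a / (2*Real.log 2) ≤ 1/2 := by
      rw [div_le_iff₀ (by positivity)]; nlinarith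
    linarith
  refine ⟨p, fun i hi => ⟨hppos i hi, lt_of_le_of_lt (hphalf i hi) (by norm_num)⟩, ?_⟩
  -- the constant
  refine ⟨2 * Real.exp 1 * (Real.log 2) ^ (-(2*a)) * (Real.log 2) ^ (2*a-ε) / a,
    by positivity, ?_⟩
  intro n hn
  have hn2 : (2:ℝ) ≤ (n:ℝ) := by exact_mod_cast hn
  have hLn : 0 < Real.log (n:ℝ) := Real.log_pos (by linarith)
  set Ln := Real.log (n:ℝ) with hLndef
  set Sn := ∑ j ∈ Finset.Ico 1 n, p j with hSndef
  -- bound on Sn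
  have hSn : Sn ≤ 1/2 + a * (Real.log Ln - Real.log (Real.log 2)) := by
    have hsplit : Sn = p 1 + ∑ j ∈ Finset.Ico 2 n, p j := by
      rw [hSndef, Finset.sum_eq_sum_Ico_succ_bot (by omega : 1 < n)]
    have htail : ∑ j ∈ Finset.Ico 2 n, p j ≤ a * (Real.log Ln - Real.log (Real.log 2)) := by
      have : ∑ j ∈ Finset.Ico 2 n, p j
          = a * ∑ j ∈ Finset.Ico 2 n, 1/(((j:ℝ)+1) * Real.log ((j:ℝ)+1)) := by
        rw [Finset.mul_sum]
        refine Finset.sum_congr rfl fun j _ => ?_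
        rw [hpdef]; ring
      rw [this]
      have := aux_tele n hn
      have ha0' := ha0.le
      exact mul_le_mul_of_nonneg_left this ha0'
    have hp1 : p 1 ≤ 1/2 := hphalf 1 le_rfl
    linarith
  -- product lower bound, valid for every i ≤ n
  have hprod : ∀ i : ℕ, i ∈ Finset.Icc 1 n →
      Real.exp (-(2*Sn)) ≤ ∏ j ∈ Finset.Ico 1 i, (1 - p j) := by
    intro i hi
    rw [Finset.mem_Icc] at hi
    have hsub : Finset.Ico 1 i ⊆ Finset.Ico 1 n := Finset.Ico_subset_Ico le_rfl hi.2
    have hSi : ∑ j ∈ Finset.Ico 1 i, p j ≤ Sn := by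
      apply Finset.sum_le_sum_of_subset_of_nonneg hsub
      intro j hj _
      rw [Finset.mem_Ico] at hj
      exact (hppos j hj.1).le
    calc Real.exp (-(2*Sn)) ≤ Real.exp (-(2*∑ j ∈ Finset.Ico 1 i, p j)) := by
          apply Real.exp_le_exp.mpr; linarith
      _ = ∏ j ∈ Finset.Ico 1 i, Real.exp (-(2 * p j)) := by
          rw [← Real.exp_sum]
          congr 1
          simp [Finset.mul_sum]
      _ ≤ ∏ j ∈ Finset.Ico 1 i, (1 - p j) := by
          apply Finset.prod_le_prod
          · intro j _; positivity
          · intro j hj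
            rw [Finset.mem_Ico] at hj
            exact aux_exp_le (p j) (hppos j hj.1).le (hphalf j hj.1)
  -- termwise bound
  have hterm : ∀ i : ℕ, i ∈ Finset.Icc 1 n →
      1 / (2 * p i * ∏ j ∈ Finset.Ico 1 i, (1 - p j)) ≤
        (((n:ℝ)+1) * Real.log ((n:ℝ)+1)) * Real.exp (2*Sn) / (2*a) := by
    intro i hi
    have hi' := hi
    rw [Finset.mem_Icc] at hi'
    have hDi := hDpos i hi'.1
    have hpi := hppos i hi'.1
    have hPi := hprod i hi
    have hden : 0 < 2 * p i * Real.exp (-(2*Sn)) := by positivity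
    have h1 : 1 / (2 * p i * ∏ j ∈ Finset.Ico 1 i, (1 - p j)) ≤
        1 / (2 * p i * Real.exp (-(2*Sn))) := by
      apply one_div_le_one_div_of_le hden
      have : (0:ℝ) ≤ 2 * p i := by positivity
      exact mul_le_mul_of_nonneg_left hPi this
    have h2 : 1 / (2 * p i * Real.exp (-(2*Sn)))
        = (((i:ℝ)+1) * Real.log ((i:ℝ)+1)) * Real.exp (2*Sn) / (2*a) := by
      rw [hpdef, Real.exp_neg]
      field_simp
    have h3 : (((i:ℝ)+1) * Real.log ((i:ℝ)+1)) * Real.exp (2*Sn) / (2*a) ≤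
        (((n:ℝ)+1) * Real.log ((n:ℝ)+1)) * Real.exp (2*Sn) / (2*a) := by
      have hin : (i:ℝ) ≤ (n:ℝ) := by exact_mod_cast hi'.2
      have hli : 0 ≤ Real.log ((i:ℝ)+1) := by
        have hi1 : (1:ℝ) ≤ (i:ℝ) := by exact_mod_cast hi'.1
        apply Real.log_nonneg; linarith
      have hlin : Real.log ((i:ℝ)+1) ≤ Real.log ((n:ℝ)+1) :=
        Real.log_le_log (by positivity) (by linarith)
      gcongr
    calc 1 / (2 * p i * ∏ j ∈ Finset.Ico 1 i, (1 - p j))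
        ≤ 1 / (2 * p i * Real.exp (-(2*Sn))) := h1
      _ = (((i:ℝ)+1) * Real.log ((i:ℝ)+1)) * Real.exp (2*Sn) / (2*a) := h2
      _ ≤ (((n:ℝ)+1) * Real.log ((n:ℝ)+1)) * Real.exp (2*Sn) / (2*a) := h3
  -- sum bound
  have hsum : TLO n p ≤
      (n:ℝ) * ((((n:ℝ)+1) * Real.log ((n:ℝ)+1)) * Real.exp (2*Sn) / (2*a)) := by
    have := Finset.sum_le_card_nsmul (Finset.Icc 1 n)
      (fun i => 1 / (2 * p i * ∏ j ∈ Finset.Ico 1 i, (1 - p j)))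
      ((((n:ℝ)+1) * Real.log ((n:ℝ)+1)) * Real.exp (2*Sn) / (2*a)) hterm
    rw [Nat.card_Icc] at this
    simpa [nsmul_eq_mul, TLO] using this
  -- bound exp(2 Sn)
  have hE : Real.exp (2*Sn) ≤
      Real.exp 1 * (Real.log 2) ^ (-(2*a)) * Ln ^ (2*a) := by
    have h1 : Real.exp (2*Sn) ≤
        Real.exp (1 + 2*a*Real.log Ln - 2*a*Real.log (Real.log 2)) := by
      apply Real.exp_le_exp.mpr; nlinarith [hSn]
    have h2 : Real.exp (1 + 2*a*Real.log Ln - 2*a*Real.log (Real.log 2))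
        = Real.exp 1 * (Real.log 2) ^ (-(2*a)) * Ln ^ (2*a) := by
      rw [Real.rpow_def_of_pos hl2, Real.rpow_def_of_pos hLn, ← Real.exp_add, ← Real.exp_add]
      congr 1
      ring
    rw [h2] at h1; exact h1
  -- bound Ln^(2a) by (log 2)^(2a-ε) * Ln^ε
  have hLpow : Ln ^ (2*a) ≤ (Real.log 2) ^ (2*a-ε) * Ln ^ ε := by
    by_cases hn3 : 3 ≤ n
    · have hn3' : (3:ℝ) ≤ (n:ℝ) := by exact_mod_cast hn3
      have h1Ln : 1 ≤ Ln := by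
        rw [hLndef, Real.le_log_iff_exp_le (by linarith)]
        have := Real.exp_one_lt_d9; linarith
      have hK : 1 ≤ (Real.log 2) ^ (2*a-ε) :=
        Real.one_le_rpow_of_pos_of_le_one_of_nonpos hl2 hl2' (by linarith)
      calc Ln ^ (2*a) ≤ Ln ^ ε := Real.rpow_le_rpow_of_exponent_le h1Ln haε
        _ = 1 * Ln ^ ε := (one_mul _).symm
        _ ≤ (Real.log 2) ^ (2*a-ε) * Ln ^ ε := by
            have : (0:ℝ) ≤ Ln ^ ε := by positivity
            exact mul_le_mul_of_nonneg_right hK this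
    · have hn2' : n = 2 := by omega
      subst hn2'
      have : Ln = Real.log 2 := by rw [hLndef]; norm_num
      rw [this, ← Real.rpow_add hl2]
      ring_nf
      exact le_rfl
  -- bound n(n+1)log(n+1) ≤ 4 n^2 Ln
  have hpoly : (n:ℝ) * (((n:ℝ)+1) * Real.log ((n:ℝ)+1)) ≤ 4 * (n:ℝ)^2 * Ln := by
    have hlog : Real.log ((n:ℝ)+1) ≤ 2 * Ln := by
      have h1 : (n:ℝ)+1 ≤ (n:ℝ)^2 := by nlinarith
      have h2 : Real.log ((n:ℝ)+1) ≤ Real.log ((n:ℝ)^2) :=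
        Real.log_le_log (by linarith) h1
      have h3 : Real.log ((n:ℝ)^2) = 2 * Ln := by
        rw [hLndef, show ((n:ℝ)^2) = (n:ℝ)^(2:ℕ) by norm_num, Real.log_pow]
        push_cast; ring
      linarith
    have hlogpos : 0 ≤ Real.log ((n:ℝ)+1) := Real.log_nonneg (by linarith)
    have hn1 : (n:ℝ)+1 ≤ 2*(n:ℝ) := by linarith
    calc (n:ℝ) * (((n:ℝ)+1) * Real.log ((n:ℝ)+1))
        ≤ (n:ℝ) * (((n:ℝ)+1) * (2*Ln)) := by gcongr
      _ ≤ (n:ℝ) * ((2*(n:ℝ)) * (2*Ln)) := by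
          have : (0:ℝ) ≤ Ln := hLn.le
          gcongr
      _ = 4 * (n:ℝ)^2 * Ln := by ring
  -- final assembly
  have hEpos : (0:ℝ) < Real.exp (2*Sn) := Real.exp_pos _
  calc TLO n p
      ≤ (n:ℝ) * ((((n:ℝ)+1) * Real.log ((n:ℝ)+1)) * Real.exp (2*Sn) / (2*a)) := hsum
    _ = ((n:ℝ) * (((n:ℝ)+1) * Real.log ((n:ℝ)+1))) * (Real.exp (2*Sn) / (2*a)) := by ring
    _ ≤ (4 * (n:ℝ)^2 * Ln) * (Real.exp (2*Sn) / (2*a)) := by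
        apply mul_le_mul_of_nonneg_right hpoly (by positivity)
    _ ≤ (4 * (n:ℝ)^2 * Ln) *
        ((Real.exp 1 * (Real.log 2) ^ (-(2*a)) * ((Real.log 2) ^ (2*a-ε) * Ln ^ ε)) / (2*a)) := by
        have hstep : Real.exp (2*Sn) ≤
            Real.exp 1 * (Real.log 2) ^ (-(2*a)) * ((Real.log 2) ^ (2*a-ε) * Ln ^ ε) := by
          refine le_trans hE ?_
          exact mul_le_mul_of_nonneg_left hLpow (by positivity)
        gcongr
    _ = (2 * Real.exp 1 * (Real.log 2) ^ (-(2*a)) * (Real.log 2) ^ (2*a-ε) / a)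
        * (n:ℝ)^2 * (Ln * Ln ^ ε) := by
        field_simp
        ring
    _ = (2 * Real.exp 1 * (Real.log 2) ^ (-(2*a)) * (Real.log 2) ^ (2*a-ε) / a)
        * (n:ℝ)^2 * Ln ^ (1+ε) := by
        rw [Real.rpow_add hLn, Real.rpow_one]
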